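/- Let a, b : ℕ → ℝ be sequences of positive reals with b_n → ∞, and suppose there are constants η > 0, C > 0, C' > 0 and θ ∈ (0,1) such that a_n² + η b_n² ≤ C a_n^{2θ} b_n^{2(1−θ)} + C' b_n for all n. Then there exist constants C₁, C₂ > 0 and n₀ such that C₁ b_n ≤ a_n ≤ C₂ b_n for all n ≥ n₀. -/

import Mathlib

open Filter

/-- if `a_n² + η b_n² ≤ C a_n^{2θ} b_n^{2(1-θ)} + C' b_n` with `b_n → ∞`,
then `a_n` and `b_n` have the same growth rate. -/
theorem same_growth_rate_of_interpolation_inequality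
    (a b : ℕ → ℝ) (ha : ∀ n, 0 < a n) (hb : ∀ n, 0 < b n)
    (hbtop : Tendsto b atTop atTop)
    (η C C' θ : ℝ) (hη : 0 < η) (hC : 0 < C) (hC' : 0 < C') (hθ : θ ∈ Set.Ioo (0:ℝ) 1)
    (hineq : ∀ n, (a n) ^ 2 + η * (b n) ^ 2 ≤
      C * (a n) ^ (2 * θ) * (b n) ^ (2 * (1 - θ)) + C' * b n) :
    ∃ C₁ > (0:ℝ), ∃ C₂ > (0:ℝ), ∃ n₀ : ℕ, ∀ n ≥ n₀,
      C₁ * b n ≤ a n ∧ a n ≤ C₂ * b n := by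
  obtain ⟨hθ0, hθ1⟩ := hθ
  have h2θ : 0 < 2 * θ := by linarith
  have h2θ' : 0 < 2 - 2 * θ := by linarith
  -- constants
  set C₁ : ℝ := (η / (2 * C)) ^ (2 * θ)⁻¹ with hC₁def
  set C₂ : ℝ := C ^ (2 - 2 * θ)⁻¹ with hC₂def
  have hC₁pos : 0 < C₁ := Real.rpow_pos_of_pos (by positivity) _
  have hC₂pos : 0 < C₂ := Real.rpow_pos_of_pos hC _
  obtain ⟨n₀, hn₀⟩ := (hbtop.eventually_ge_atTop (2 * C' / η)).exists_forall_of_atTop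
  refine ⟨C₁, hC₁pos, C₂, hC₂pos, n₀, fun n hn => ?_⟩
  have hbn := hb n
  have han := ha n
  have hbig : 2 * C' / η ≤ b n := hn₀ n hn
  have habs : C' * b n ≤ (η / 2) * (b n) ^ 2 := by
    have h1 : C' ≤ (η / 2) * b n := by
      rw [div_le_iff₀ hη] at hbig
      nlinarith
    nlinarith
  have hkey : (a n) ^ 2 + (η / 2) * (b n) ^ 2 ≤
      C * (a n) ^ (2 * θ) * (b n) ^ (2 * (1 - θ)) := by
    have := hineq n
    nlinarith
  have hA : (a n : ℝ) ^ (2 : ℝ) = (a n) ^ (2 * θ) * (a n) ^ (2 - 2 * θ) := by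
    rw [← Real.rpow_add han]; ring_nf
  have hB : (b n : ℝ) ^ (2 : ℝ) = (b n) ^ (2 * θ) * (b n) ^ (2 - 2 * θ) := by
    rw [← Real.rpow_add hbn]; ring_nf
  have haR : (a n : ℝ) ^ (2 : ℝ) = (a n) ^ 2 := by
    rw [show ((2:ℝ)) = ((2:ℕ):ℝ) by norm_num, Real.rpow_natCast]
  have hbR : (b n : ℝ) ^ (2 : ℝ) = (b n) ^ 2 := by
    rw [show ((2:ℝ)) = ((2:ℕ):ℝ) by norm_num, Real.rpow_natCast]
  have haθ : (0:ℝ) < (a n) ^ (2 * θ) := Real.rpow_pos_of_pos han _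
  have hbθ : (0:ℝ) < (b n) ^ (2 * θ) := Real.rpow_pos_of_pos hbn _
  have haθ' : (0:ℝ) < (a n) ^ (2 - 2 * θ) := Real.rpow_pos_of_pos han _
  have hbθ' : (0:ℝ) < (b n) ^ (2 - 2 * θ) := Real.rpow_pos_of_pos hbn _
  have hexp : 2 * (1 - θ) = 2 - 2 * θ := by ring
  rw [hexp] at hkey
  constructor
  · -- lower bound: (η/2) b^{2θ} ≤ C a^{2θ}
    have h1 : (η / 2) * ((b n) ^ (2 * θ) * (b n) ^ (2 - 2 * θ)) ≤
        C * (a n) ^ (2 * θ) * (b n) ^ (2 - 2 * θ) := by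
      rw [← hB, hbR]
      nlinarith [sq_nonneg (a n)]
    have h2 : (η / 2) * (b n) ^ (2 * θ) ≤ C * (a n) ^ (2 * θ) := by
      have := (mul_le_mul_iff_left₀ hbθ').mp (by linarith [h1] : (η / 2) * (b n) ^ (2 * θ) * (b n) ^ (2 - 2 * θ) ≤ C * (a n) ^ (2 * θ) * (b n) ^ (2 - 2 * θ))
      linarith
    have h3 : (η / (2 * C)) * (b n) ^ (2 * θ) ≤ (a n) ^ (2 * θ) := by
      rw [div_mul_eq_mul_div, div_le_iff₀ (by positivity)]
      calc η * (b n) ^ (2 * θ) = 2 * ((η / 2) * (b n) ^ (2 * θ)) := by ring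
        _ ≤ 2 * (C * (a n) ^ (2 * θ)) := by linarith
        _ = (a n) ^ (2 * θ) * (2 * C) := by ring
    have h4 : ((η / (2 * C)) * (b n) ^ (2 * θ)) ^ (2 * θ)⁻¹ ≤
        ((a n) ^ (2 * θ)) ^ (2 * θ)⁻¹ :=
      Real.rpow_le_rpow (by positivity) h3 (by positivity)
    rwa [Real.mul_rpow (by positivity) (by positivity),
      Real.rpow_rpow_inv (le_of_lt hbn) (ne_of_gt h2θ),
      Real.rpow_rpow_inv (le_of_lt han) (ne_of_gt h2θ)] at h4
  · -- upper bound
    have h1 : (a n) ^ (2 * θ) * (a n) ^ (2 - 2 * θ) ≤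
        C * (a n) ^ (2 * θ) * (b n) ^ (2 - 2 * θ) := by
      rw [← hA, haR]
      nlinarith [sq_nonneg (b n)]
    have h2 : (a n) ^ (2 - 2 * θ) ≤ C * (b n) ^ (2 - 2 * θ) := by
      have h1' : (a n) ^ (2 * θ) * (a n) ^ (2 - 2 * θ) ≤
          (a n) ^ (2 * θ) * (C * (b n) ^ (2 - 2 * θ)) := by
        calc (a n) ^ (2 * θ) * (a n) ^ (2 - 2 * θ) ≤
            C * (a n) ^ (2 * θ) * (b n) ^ (2 - 2 * θ) := h1
          _ = (a n) ^ (2 * θ) * (C * (b n) ^ (2 - 2 * θ)) := by ring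
      exact (mul_le_mul_iff_right₀ haθ).mp h1'
    have h4 : ((a n) ^ (2 - 2 * θ)) ^ (2 - 2 * θ)⁻¹ ≤
        (C * (b n) ^ (2 - 2 * θ)) ^ (2 - 2 * θ)⁻¹ :=
      Real.rpow_le_rpow (by positivity) h2 (by positivity)
    rwa [Real.mul_rpow (le_of_lt hC) (by positivity),
      Real.rpow_rpow_inv (le_of_lt hbn) (ne_of_gt h2θ'),
      Real.rpow_rpow_inv (le_of_lt han) (ne_of_gt h2θ')] at h4
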